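/- Let Γ and Δ be countable discrete groups. Then there exists a map μ : Δ_Γ → Prob(Γ) such that: (i) for every s ∈ Γ, ‖s·μ_y − μ_{s·y}‖₁ → 0 as y → ∞ along the cofinite filter on Δ_Γ, where s·y denotes the Bernoulli shift action of Γ on Δ_Γ; and (ii) for every x ∈ Δ_Γ, ‖μ_{xy} − μ_y‖₁ → 0 and ‖μ_{yx} − μ_y‖₁ → 0 as y → ∞ along the cofinite filter, where xy and yx denote products in the group Δ_Γ. -/

import Mathlib

open Function

/-- The group `Δ_Γ = ⊕_Γ Δ` of finitely supported functions `Γ → Δ`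
under pointwise multiplication, as a subgroup of `Γ → Δ`. -/
def DeltaGamma (Γ Δ : Type*) [Group Δ] : Subgroup (Γ → Δ) where
  carrier := {y | (mulSupport y).Finite}
  one_mem' := by simp [mulSupport_one]
  mul_mem' := by
    intro a b ha hb
    exact ((Set.Finite.union ha hb).subset (mulSupport_mul a b))
  inv_mem' := by
    intro a ha
    simpa [mulSupport_inv] using ha

/-- The Bernoulli shift of `Γ` on `Δ_Γ`: `(s·y)(t) = y(s⁻¹t)`. -/
def bshift {Γ Δ : Type*} [Group Γ] [Group Δ] (s : Γ) (y : DeltaGamma Γ Δ) :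
    DeltaGamma Γ Δ :=
  ⟨fun t => (y : Γ → Δ) (s⁻¹ * t), by
    have hy : (mulSupport (y : Γ → Δ)).Finite := y.2
    refine Set.Finite.subset (hy.image (fun t => s * t)) ?_
    intro t ht
    exact ⟨s⁻¹ * t, ht, by group⟩⟩

lemma exists_length (G : Type*) [Group G] [Countable G] :
    ∃ ℓ : G → ℕ, ℓ 1 = 0 ∧ (∀ a b : G, ℓ (a * b) ≤ ℓ a + ℓ b) ∧ (∀ a : G, ℓ a⁻¹ = ℓ a) ∧
      ∀ n : ℕ, {g : G | ℓ g ≤ n}.Finite := by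
  obtain ⟨f, hf⟩ := exists_injective_nat G
  set w : G → ℕ := fun g => f g + f g⁻¹ + 1 with hw
  have wsym : ∀ g : G, w g⁻¹ = w g := by
    intro g; simp only [hw, inv_inv]; omega
  have wpos : ∀ g : G, 1 ≤ w g := by intro g; simp [hw]
  set S : G → Set ℕ := fun g => {c | ∃ l : List G, l.prod = g ∧ (l.map w).sum = c} with hS
  have hne : ∀ g, (S g).Nonempty := fun g => ⟨w g, [g], by simp, by simp⟩
  set ℓ : G → ℕ := fun g => sInf (S g) with hℓ
  have hle : ∀ (g : G) (l : List G), l.prod = g → ℓ g ≤ (l.map w).sum := by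
    intro g l h
    exact Nat.sInf_le ⟨l, h, rfl⟩
  have hex : ∀ g : G, ∃ l : List G, l.prod = g ∧ (l.map w).sum = ℓ g := fun g =>
    Nat.sInf_mem (hne g)
  have hone : ℓ 1 = 0 := Nat.le_zero.mp (hle 1 [] (by simp))
  have hsub : ∀ a b : G, ℓ (a * b) ≤ ℓ a + ℓ b := by
    intro a b
    obtain ⟨la, hpa, hsa⟩ := hex a
    obtain ⟨lb, hpb, hsb⟩ := hex b
    have := hle (a * b) (la ++ lb) (by rw [List.prod_append, hpa, hpb])
    rwa [List.map_append, List.sum_append, hsa, hsb] at this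
  have hinvle : ∀ a : G, ℓ a⁻¹ ≤ ℓ a := by
    intro a
    obtain ⟨l, hp, hs⟩ := hex a
    have hp' : ((l.map fun x => x⁻¹).reverse).prod = a⁻¹ := by
      rw [← List.prod_inv_reverse, hp]
    have := hle a⁻¹ _ hp'
    rwa [List.map_reverse, List.sum_reverse, List.map_map,
      (by funext x; exact wsym x : w ∘ (fun x : G => x⁻¹) = w), hs] at this
  have hinv : ∀ a : G, ℓ a⁻¹ = ℓ a := fun a =>
    le_antisymm (hinvle a) (by simpa using hinvle a⁻¹)
  refine ⟨ℓ, hone, hsub, hinv, ?_⟩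
  intro n
  induction n with
  | zero =>
    refine (Set.finite_singleton (1 : G)).subset ?_
    intro g hg
    obtain ⟨l, hp, hs⟩ := hex g
    have : ℓ g = 0 := Nat.le_zero.mp hg
    rw [this] at hs
    match l, hp, hs with
    | [], hp, _ => simpa using hp.symm
    | a :: l', _, hs =>
      rw [List.map_cons, List.sum_cons] at hs
      have := wpos a
      exact absurd hs (by omega)
  | succ n ih =>
    have hWfin : {h : G | w h ≤ n + 1}.Finite := by
      have : {h : G | w h ≤ n + 1} ⊆ f ⁻¹' (Set.Iic (n + 1)) := by
        intro h hh
        simp only [Set.mem_preimage, Set.mem_Iic]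
        simp only [hw, Set.mem_setOf_eq] at hh
        omega
      exact (Set.Finite.preimage hf.injOn (Set.finite_Iic _)).subset this
    refine (((Set.finite_singleton (1 : G)).union
      (hWfin.biUnion (fun h _ => ih.image (fun g' => h * g'))))).subset ?_
    intro g hg
    obtain ⟨l, hp, hs⟩ := hex g
    match l, hp, hs with
    | [], hp, _ => exact Or.inl (by simpa using hp.symm)
    | a :: l', hp, hs =>
      refine Or.inr ?_
      rw [List.map_cons, List.sum_cons] at hs
      have hg' : ℓ g ≤ n + 1 := hg
      have h1 := hle l'.prod l' rfl
      have h2 := wpos a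
      have hwa : w a ≤ n + 1 := by omega
      have hl' : ℓ l'.prod ≤ n := by omega
      exact Set.mem_biUnion hwa ⟨l'.prod, hl', by rw [← hp]; simp⟩

section Main
set_option linter.unusedSectionVars false
open scoped Classical

variable {Γ Δ : Type*} [Group Γ] [Group Δ]

lemma dg_fin (y : DeltaGamma Γ Δ) : (mulSupport (y : Γ → Δ)).Finite := y.2

noncomputable def S0 (y : DeltaGamma Γ Δ) : Finset Γ := (dg_fin y).toFinset

lemma mem_S0 {y : DeltaGamma Γ Δ} {t : Γ} : t ∈ S0 y ↔ (y : Γ → Δ) t ≠ 1 := by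
  simp [S0, Set.Finite.mem_toFinset, mulSupport]

lemma bshift_coe (s : Γ) (y : DeltaGamma Γ Δ) (t : Γ) :
    (bshift s y : Γ → Δ) t = (y : Γ → Δ) (s⁻¹ * t) := rfl

variable (L : Γ → ℕ) (ℓδ : Δ → ℕ)

noncomputable def vf (y : DeltaGamma Γ Δ) (t : Γ) : ℝ :=
  (if (y : Γ → Δ) t = 1 then 0 else (1 + L t + ℓδ ((y : Γ → Δ) t) : ℝ)) +
  (if t = 1 then 1 else 0)

noncomputable def Vf (y : DeltaGamma Γ Δ) : ℝ :=
  ∑ t ∈ insert (1 : Γ) (S0 y), vf L ℓδ y t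

noncomputable def mf (y : DeltaGamma Γ Δ) (t : Γ) : ℝ := vf L ℓδ y t / Vf L ℓδ y

lemma vf_nonneg (y : DeltaGamma Γ Δ) (t : Γ) : 0 ≤ vf L ℓδ y t := by
  unfold vf
  have h1 : (0:ℝ) ≤ 1 + L t + ℓδ ((y : Γ → Δ) t) := by positivity
  split <;> split <;> simp <;> positivity

lemma vf_eq_zero (y : DeltaGamma Γ Δ) {t : Γ} (ht : t ∉ insert (1 : Γ) (S0 y)) :
    vf L ℓδ y t = 0 := by
  simp only [Finset.mem_insert, mem_S0] at ht
  push_neg at ht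
  unfold vf
  simp [ht.1, ht.2]

/-- summing `vf` over any finset containing `insert 1 (S0 y)` gives `Vf`. -/
lemma sum_vf (y : DeltaGamma Γ Δ) {T : Finset Γ} (hT : insert (1 : Γ) (S0 y) ⊆ T) :
    ∑ t ∈ T, vf L ℓδ y t = Vf L ℓδ y :=
  (Finset.sum_subset hT (fun t _ ht => vf_eq_zero L ℓδ y ht)).symm

lemma one_le_vf_one (y : DeltaGamma Γ Δ) : 1 ≤ vf L ℓδ y 1 := by
  unfold vf
  have h1 : (0:ℝ) ≤ 1 + L (1:Γ) + ℓδ ((y : Γ → Δ) 1) := by positivity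
  split <;> simp <;> positivity

lemma one_le_Vf (y : DeltaGamma Γ Δ) : 1 ≤ Vf L ℓδ y := by
  calc (1:ℝ) ≤ vf L ℓδ y 1 := one_le_vf_one L ℓδ y
  _ ≤ Vf L ℓδ y :=
    Finset.single_le_sum (fun t _ => vf_nonneg L ℓδ y t) (Finset.mem_insert_self _ _)

lemma Vf_pos (y : DeltaGamma Γ Δ) : 0 < Vf L ℓδ y :=
  lt_of_lt_of_le one_pos (one_le_Vf L ℓδ y)

/-- `vf y t ≥ 1 + L t` for `t` in the support. -/
lemma le_vf (y : DeltaGamma Γ Δ) {t : Γ} (ht : (y : Γ → Δ) t ≠ 1) :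
    (1 + L t : ℝ) ≤ vf L ℓδ y t := by
  unfold vf
  rw [if_neg ht]
  have : (0:ℝ) ≤ ℓδ ((y : Γ → Δ) t) := by positivity
  have h2 : (0:ℝ) ≤ (if t = (1:Γ) then (1:ℝ) else 0) := by split <;> norm_num
  push_cast
  linarith

lemma lL_le_Vf (y : DeltaGamma Γ Δ) {t : Γ} (ht : (y : Γ → Δ) t ≠ 1) :
    (1 + L t + ℓδ ((y : Γ → Δ) t) : ℝ) ≤ Vf L ℓδ y := by
  have h1 : (1 + L t + ℓδ ((y : Γ → Δ) t) : ℝ) ≤ vf L ℓδ y t := by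
    unfold vf
    rw [if_neg ht]
    have h2 : (0:ℝ) ≤ (if t = (1:Γ) then (1:ℝ) else 0) := by split <;> norm_num
    push_cast
    linarith
  calc (1 + L t + ℓδ ((y : Γ → Δ) t) : ℝ) ≤ vf L ℓδ y t := h1
  _ ≤ Vf L ℓδ y := Finset.single_le_sum (fun r _ => vf_nonneg L ℓδ y r)
      (Finset.mem_insert_of_mem (mem_S0.mpr ht))

/-- helper: sum of a nonneg function over any finset is at most its sum over a
finset containing its support. -/
lemma sum_le_of_support {G : Type*} (f : G → ℝ) (B : Finset G)
    (h0 : ∀ t, 0 ≤ f t) (hz : ∀ t ∉ B, f t = 0) (A : Finset G) :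
    ∑ t ∈ A, f t ≤ ∑ t ∈ B, f t := by
  classical
  calc ∑ t ∈ A, f t ≤ ∑ t ∈ A ∪ B, f t :=
        Finset.sum_le_sum_of_subset_of_nonneg Finset.subset_union_left
          (fun t _ _ => h0 t)
  _ = ∑ t ∈ B, f t := by
      refine (Finset.sum_subset Finset.subset_union_right ?_).symm
      intro t _ ht
      exact hz t ht

/-- key `ℓ¹` estimate on normalized measures. -/
lemma ratio_dist {G : Type*} (u u' : G → ℝ) (T : Finset G)
    (hu0 : ∀ t, 0 ≤ u t) (hu'0 : ∀ t, 0 ≤ u' t)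
    (hu : ∀ t ∉ T, u t = 0) (hu' : ∀ t ∉ T, u' t = 0)
    (hV : 0 < ∑ t ∈ T, u t) (hV' : 0 < ∑ t ∈ T, u' t) :
    ∑' t, |u' t / (∑ r ∈ T, u' r) - u t / (∑ r ∈ T, u r)| ≤
      2 * (∑ t ∈ T, |u' t - u t|) / (∑ r ∈ T, u r) := by
  classical
  set V : ℝ := ∑ r ∈ T, u r with hVdef
  set V' : ℝ := ∑ r ∈ T, u' r with hV'def
  set D : ℝ := ∑ t ∈ T, |u' t - u t| with hDdef
  have hVD : |V' - V| ≤ D := by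
    rw [hVdef, hV'def, hDdef, ← Finset.sum_sub_distrib]
    exact Finset.abs_sum_le_sum_abs _ _
  have htsum : ∑' t, |u' t / V' - u t / V| = ∑ t ∈ T, |u' t / V' - u t / V| := by
    refine tsum_eq_sum ?_
    intro t ht
    rw [hu t ht, hu' t ht]
    simp
  rw [htsum]
  have hpt : ∀ t ∈ T, |u' t / V' - u t / V| ≤ |u' t - u t| / V + u' t * |V - V'| / (V' * V) := by
    intro t _
    have hident : u' t / V' - u t / V = (u' t - u t) / V + u' t * (V - V') / (V' * V) := by
      field_simp
      ring
    rw [hident]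
    calc |(u' t - u t) / V + u' t * (V - V') / (V' * V)|
        ≤ |(u' t - u t) / V| + |u' t * (V - V') / (V' * V)| := abs_add_le _ _
    _ = |u' t - u t| / V + u' t * |V - V'| / (V' * V) := by
        rw [abs_div, abs_div, abs_mul, abs_mul, abs_of_pos hV, abs_of_pos hV',
          abs_of_nonneg (hu'0 t)]
  calc ∑ t ∈ T, |u' t / V' - u t / V|
      ≤ ∑ t ∈ T, (|u' t - u t| / V + u' t * |V - V'| / (V' * V)) :=
        Finset.sum_le_sum hpt
  _ = D / V + V' * |V - V'| / (V' * V) := by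
      rw [Finset.sum_add_distrib, ← Finset.sum_div, ← hDdef]
      congr 1
      rw [← Finset.sum_div, ← Finset.sum_mul, ← hV'def]
  _ = D / V + |V - V'| / V := by
      have h1 : V' ≠ 0 := ne_of_gt hV'
      have h2 : V ≠ 0 := ne_of_gt hV
      field_simp
  _ ≤ D / V + D / V := by
      have : |V - V'| ≤ D := by rwa [abs_sub_comm]
      gcongr
  _ = 2 * D / V := by ring


lemma Vf_proper (hLfin : ∀ n : ℕ, {g : Γ | L g ≤ n}.Finite)
    (hdfin : ∀ n : ℕ, {d : Δ | ℓδ d ≤ n}.Finite) (M : ℝ) :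
    {y : DeltaGamma Γ Δ | Vf L ℓδ y ≤ M}.Finite := by
  set A : Set Γ := {t : Γ | (L t : ℝ) ≤ M} with hAdef
  have hA : A.Finite := by
    refine (hLfin ⌈M⌉₊).subset ?_
    intro t ht
    have h2 : (L t : ℝ) ≤ (⌈M⌉₊ : ℝ) := le_trans ht (Nat.le_ceil M)
    exact_mod_cast h2
  set B : Set Δ := insert 1 {d : Δ | (ℓδ d : ℝ) ≤ M} with hBdef
  have hB : B.Finite := by
    refine Set.Finite.insert 1 ((hdfin ⌈M⌉₊).subset ?_)
    intro d hd
    have h2 : (ℓδ d : ℝ) ≤ (⌈M⌉₊ : ℝ) := le_trans hd (Nat.le_ceil M)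
    exact_mod_cast h2
  have key : ∀ y : DeltaGamma Γ Δ, Vf L ℓδ y ≤ M → ∀ t : Γ,
      (y : Γ → Δ) t ≠ 1 → t ∈ A ∧ ((y : Γ → Δ) t) ∈ B := by
    intro y hy t ht
    have h1 := lL_le_Vf L ℓδ y ht
    have hLt : (0:ℝ) ≤ L t := by positivity
    have hlt : (0:ℝ) ≤ ℓδ ((y : Γ → Δ) t) := by positivity
    constructor
    · exact le_trans (by linarith) hy
    · exact Set.mem_insert_of_mem _ (le_trans (by linarith) hy)
  haveI : Finite ↥A := hA.to_subtype
  refine Set.Finite.of_finite_image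
    (f := fun y : DeltaGamma Γ Δ => fun a : ↥A => (y : Γ → Δ) a) ?_ ?_
  · refine Set.Finite.subset (Set.Finite.pi (fun _ : ↥A => hB)) ?_
    rintro g ⟨y, hy, rfl⟩
    intro a _
    dsimp only
    by_cases h : (y : Γ → Δ) a = 1
    · rw [h]; exact Set.mem_insert _ _
    · exact ((key y hy a h).2)
  · intro y hy y' hy' heq
    have : (y : Γ → Δ) = (y' : Γ → Δ) := by
      funext t
      by_cases htA : t ∈ A
      · exact congrFun heq ⟨t, htA⟩
      · have h1 : (y : Γ → Δ) t = 1 := by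
          by_contra h
          exact htA ((key y hy t h).1)
        have h2 : (y' : Γ → Δ) t = 1 := by
          by_contra h
          exact htA ((key y' hy' t h).1)
        rw [h1, h2]
    exact Subtype.ext this

lemma tendsto_Vf_atTop (hLfin : ∀ n : ℕ, {g : Γ | L g ≤ n}.Finite)
    (hdfin : ∀ n : ℕ, {d : Δ | ℓδ d ≤ n}.Finite) :
    Filter.Tendsto (Vf L ℓδ) Filter.cofinite Filter.atTop := by
  rw [Filter.tendsto_atTop]
  intro b
  rw [Filter.eventually_cofinite]
  refine (Vf_proper L ℓδ hLfin hdfin b).subset ?_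
  intro y hy
  exact le_of_not_ge hy

lemma tendsto_div_Vf (hLfin : ∀ n : ℕ, {g : Γ | L g ≤ n}.Finite)
    (hdfin : ∀ n : ℕ, {d : Δ | ℓδ d ≤ n}.Finite) (c : ℝ) :
    Filter.Tendsto (fun y : DeltaGamma Γ Δ => c / Vf L ℓδ y)
      Filter.cofinite (nhds 0) :=
  Filter.Tendsto.div_atTop tendsto_const_nhds (tendsto_Vf_atTop L ℓδ hLfin hdfin)

set_option maxHeartbeats 1000000 in
lemma tendsto_bound_A (hLfin : ∀ n : ℕ, {g : Γ | L g ≤ n}.Finite)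
    (hdfin : ∀ n : ℕ, {d : Δ | ℓδ d ≤ n}.Finite) (C : ℝ) (hC : 0 ≤ C) :
    Filter.Tendsto
      (fun y : DeltaGamma Γ Δ => 2 * (C * (S0 y).card + 2) / Vf L ℓδ y)
      Filter.cofinite (nhds 0) := by
  rw [Metric.tendsto_nhds]
  intro ε hε
  rw [Filter.eventually_cofinite]
  set R : ℕ := ⌈(4 * C + 4) / ε⌉₊ with hRdef
  set m : ℕ := (hLfin R).toFinset.card with hmdef
  set N : ℝ := 1 + (C + 1) * m with hNdef
  set M : ℝ := (2 * C * N + 4) / ε with hMdef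
  refine (Vf_proper L ℓδ hLfin hdfin M).subset ?_
  intro y hy
  simp only [Set.mem_setOf_eq] at hy ⊢
  set n : ℝ := ((S0 y).card : ℝ) with hndef
  set V : ℝ := Vf L ℓδ y with hVdef
  have hV1 : (1:ℝ) ≤ V := one_le_Vf L ℓδ y
  have hn0 : (0:ℝ) ≤ n := by positivity
  have hfn : 0 ≤ 2 * (C * n + 2) / V := by positivity
  have hεle : ε ≤ 2 * (C * n + 2) / V := by
    rw [Real.dist_eq, sub_zero, abs_of_nonneg hfn] at hy
    exact le_of_not_gt hy
  have h1 : ε * V ≤ 2 * C * n + 4 := by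
    have h2 : ε * V ≤ 2 * (C * n + 2) := (le_div_iff₀ (by linarith)).mp hεle
    linarith
  -- lower bound for V via points with large L
  set Q : Finset Γ := (S0 y).filter (fun t => (R : ℝ) < (L t : ℝ)) with hQdef
  have hq0 : (0:ℝ) ≤ (Q.card : ℝ) := by positivity
  have hQ1 : (Q.card : ℝ) * (1 + R) ≤ V := by
    have hsub : Q ⊆ insert (1:Γ) (S0 y) := by
      intro t ht
      exact Finset.mem_insert_of_mem (Finset.mem_filter.mp ht).1
    have step1 : ∑ t ∈ Q, vf L ℓδ y t ≤ V :=
      Finset.sum_le_sum_of_subset_of_nonneg hsub (fun t _ _ => vf_nonneg L ℓδ y t)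
    have step2 : ∀ t ∈ Q, (1 + (R:ℝ)) ≤ vf L ℓδ y t := by
      intro t ht
      obtain ⟨ht1, ht2⟩ := Finset.mem_filter.mp ht
      have h3 := le_vf L ℓδ y (mem_S0.mp ht1)
      linarith
    calc (Q.card : ℝ) * (1 + R) = ∑ _t ∈ Q, (1 + (R:ℝ)) := by
          rw [Finset.sum_const, nsmul_eq_mul]
    _ ≤ ∑ t ∈ Q, vf L ℓδ y t := Finset.sum_le_sum step2
    _ ≤ V := step1
  have hQ2 : n ≤ (Q.card : ℝ) + m := by
    have hsplit : Q.card + ((S0 y).filter (fun t => ¬ ((R : ℝ) < (L t : ℝ)))).card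
        = (S0 y).card := Finset.card_filter_add_card_filter_not _
    have hsub2 : ((S0 y).filter (fun t => ¬ ((R : ℝ) < (L t : ℝ)))) ⊆
        (hLfin R).toFinset := by
      intro t ht
      obtain ⟨_, ht2⟩ := Finset.mem_filter.mp ht
      rw [Set.Finite.mem_toFinset]
      have : (L t : ℝ) ≤ (R : ℝ) := le_of_not_gt ht2
      exact_mod_cast this
    have := Finset.card_le_card hsub2
    have hcast : (S0 y).card ≤ Q.card + m := by omega
    have hcast2 : ((S0 y).card : ℝ) ≤ (Q.card : ℝ) + (m : ℝ) := by exact_mod_cast hcast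
    simpa [hndef] using hcast2
  have hR : 4 * C + 4 ≤ ε * (1 + R) := by
    have hceil : (4 * C + 4) / ε ≤ (R : ℝ) := Nat.le_ceil _
    have h5 : (4 * C + 4) / ε * ε ≤ (R : ℝ) * ε :=
      mul_le_mul_of_nonneg_right hceil hε.le
    rw [div_mul_cancel₀ _ (ne_of_gt hε)] at h5
    linarith [hε.le]
  have h3 : (4 * C + 4) * (Q.card : ℝ) ≤ 2 * C * n + 4 := by
    linarith [mul_le_mul_of_nonneg_right hR hq0,
      mul_le_mul_of_nonneg_left hQ1 hε.le, h1]
  have hm0 : (0:ℝ) ≤ (m:ℝ) := by positivity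
  have hnN : n ≤ N := by
    have h4 : (4 * C + 4) * n ≤ (4 * C + 4) * ((Q.card : ℝ) + m) :=
      mul_le_mul_of_nonneg_left hQ2 (by linarith)
    have h5 : (0:ℝ) ≤ 2 * C * n := by positivity
    have h6 : (4 * C + 4) * (m : ℝ) = 4 * ((C + 1) * m) := by ring
    rw [hNdef]
    linarith
  -- conclude V ≤ M
  rw [hMdef, le_div_iff₀ hε]
  have h7 : (2 * C) * n ≤ (2 * C) * N := mul_le_mul_of_nonneg_left hnN (by linarith)
  linarith


lemma mf_nonneg (y : DeltaGamma Γ Δ) (t : Γ) : 0 ≤ mf L ℓδ y t :=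
  div_nonneg (vf_nonneg L ℓδ y t) (Vf_pos L ℓδ y).le

lemma mf_zero (y : DeltaGamma Γ Δ) {t : Γ} (ht : t ∉ insert (1:Γ) (S0 y)) :
    mf L ℓδ y t = 0 := by
  unfold mf
  rw [vf_eq_zero L ℓδ y ht, zero_div]

lemma mf_summable (y : DeltaGamma Γ Δ) : Summable (mf L ℓδ y) :=
  summable_of_ne_finset_zero (s := insert (1:Γ) (S0 y)) (fun t ht => mf_zero L ℓδ y ht)

lemma mf_tsum (y : DeltaGamma Γ Δ) : ∑' t, mf L ℓδ y t = 1 := by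
  rw [tsum_eq_sum (s := insert (1:Γ) (S0 y)) (fun t ht => mf_zero L ℓδ y ht)]
  unfold mf
  rw [← Finset.sum_div, Vf]
  exact div_self (ne_of_gt (Vf_pos L ℓδ y))

/-- unified pointwise+global bound for multiplication (left or right). -/
lemma dist_bound_mul (hℓone : ℓδ 1 = 0) (x y z : DeltaGamma Γ Δ)
    (hsupp : ∀ t, (x : Γ → Δ) t = 1 → (z : Γ → Δ) t = (y : Γ → Δ) t)
    (hℓ1 : ∀ t, (ℓδ ((z : Γ → Δ) t) : ℝ) ≤
      ℓδ ((y : Γ → Δ) t) + (ℓδ ((x : Γ → Δ) t) + ℓδ (((x : Γ → Δ) t)⁻¹)))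
    (hℓ2 : ∀ t, (ℓδ ((y : Γ → Δ) t) : ℝ) ≤
      ℓδ ((z : Γ → Δ) t) + (ℓδ ((x : Γ → Δ) t) + ℓδ (((x : Γ → Δ) t)⁻¹))) :
    ∑' t, |mf L ℓδ z t - mf L ℓδ y t| ≤
      2 * (∑ t ∈ S0 x, (1 + L t + ℓδ ((x : Γ → Δ) t) + ℓδ (((x : Γ → Δ) t)⁻¹) : ℝ))
        / Vf L ℓδ y := by
  classical
  set ψ : Γ → ℝ := fun t => if (x : Γ → Δ) t = 1 then 0
    else (1 + L t + ℓδ ((x : Γ → Δ) t) + ℓδ (((x : Γ → Δ) t)⁻¹) : ℝ) with hψdef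
  have hψ0 : ∀ t, 0 ≤ ψ t := by
    intro t
    rw [hψdef]
    dsimp only
    split
    · exact le_rfl
    · positivity
  set T : Finset Γ := insert (1:Γ) (S0 y) ∪ insert (1:Γ) (S0 z) with hTdef
  have hTy : insert (1:Γ) (S0 y) ⊆ T := Finset.subset_union_left
  have hTz : insert (1:Γ) (S0 z) ⊆ T := Finset.subset_union_right
  have key := ratio_dist (vf L ℓδ y) (vf L ℓδ z) T
    (vf_nonneg L ℓδ y) (vf_nonneg L ℓδ z)
    (fun t ht => vf_eq_zero L ℓδ y (fun h => ht (hTy h)))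
    (fun t ht => vf_eq_zero L ℓδ z (fun h => ht (hTz h)))
    (by rw [sum_vf L ℓδ y hTy]; exact Vf_pos L ℓδ y)
    (by rw [sum_vf L ℓδ z hTz]; exact Vf_pos L ℓδ z)
  rw [sum_vf L ℓδ y hTy, sum_vf L ℓδ z hTz] at key
  have hpt : ∀ t, |vf L ℓδ z t - vf L ℓδ y t| ≤ ψ t := by
    intro t
    by_cases hx : (x : Γ → Δ) t = 1
    · have hvz : vf L ℓδ z t = vf L ℓδ y t := by
        unfold vf
        rw [hsupp t hx]
      rw [hvz]
      simp [hψdef, hx]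
    · have hψt : ψ t = (1 + L t + ℓδ ((x : Γ → Δ) t) + ℓδ (((x : Γ → Δ) t)⁻¹) : ℝ) := by
        rw [hψdef]; simp [hx]
      rw [hψt]
      have hc1 : (0:ℝ) ≤ ℓδ ((x : Γ → Δ) t) := by positivity
      have hc2 : (0:ℝ) ≤ ℓδ (((x : Γ → Δ) t)⁻¹) := by positivity
      have hL0 : (0:ℝ) ≤ L t := by positivity
      have h1 := hℓ1 t
      have h2 := hℓ2 t
      unfold vf
      rw [abs_le]
      by_cases hz : (z : Γ → Δ) t = 1 <;> by_cases hy : (y : Γ → Δ) t = 1 <;>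
        simp only [hz, hy, if_true, if_false] <;> constructor
      · simp; linarith
      · simp; linarith
      · rw [hz, hℓone] at h2
        push_cast at h2 ⊢
        have : (0:ℝ) ≤ ℓδ ((y : Γ → Δ) t) := by positivity
        ring_nf
        nlinarith
      · rw [hz, hℓone] at h2
        push_cast at h2 ⊢
        nlinarith
      · rw [hy, hℓone] at h1
        push_cast at h1 ⊢
        nlinarith
      · rw [hy, hℓone] at h1
        push_cast at h1 ⊢
        have : (0:ℝ) ≤ ℓδ ((z : Γ → Δ) t) := by positivity
        nlinarith
      · push_cast
        nlinarith [h1, h2]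
      · push_cast
        nlinarith [h1, h2]
  have hψz : ∀ t ∉ S0 x, ψ t = 0 := by
    intro t ht
    rw [hψdef]
    dsimp only
    rw [if_pos (not_not.mp (fun h => ht (mem_S0.mpr h)))]
  have hVy := Vf_pos L ℓδ y
  calc ∑' t, |mf L ℓδ z t - mf L ℓδ y t|
      = ∑' t, |vf L ℓδ z t / Vf L ℓδ z - vf L ℓδ y t / Vf L ℓδ y| := by
        simp only [mf]
  _ ≤ 2 * (∑ t ∈ T, |vf L ℓδ z t - vf L ℓδ y t|) / Vf L ℓδ y := key
  _ ≤ 2 * (∑ t ∈ S0 x,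
        (1 + L t + ℓδ ((x : Γ → Δ) t) + ℓδ (((x : Γ → Δ) t)⁻¹) : ℝ)) / Vf L ℓδ y := by
      gcongr
      calc ∑ t ∈ T, |vf L ℓδ z t - vf L ℓδ y t| ≤ ∑ t ∈ T, ψ t :=
            Finset.sum_le_sum (fun t _ => hpt t)
      _ ≤ ∑ t ∈ S0 x, ψ t := sum_le_of_support ψ (S0 x) hψ0 hψz T
      _ = ∑ t ∈ S0 x,
            (1 + L t + ℓδ ((x : Γ → Δ) t) + ℓδ (((x : Γ → Δ) t)⁻¹) : ℝ) := by
          refine Finset.sum_congr rfl ?_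
          intro t ht
          rw [hψdef]
          dsimp only
          rw [if_neg (mem_S0.mp ht)]

lemma dist_bound_shift (s : Γ) (y : DeltaGamma Γ Δ)
    (hLs : ∀ t : Γ, |(L t : ℝ) - (L (s⁻¹ * t) : ℝ)| ≤ (L s : ℝ) + (L s⁻¹ : ℝ)) :
    ∑' t, |mf L ℓδ y (s⁻¹ * t) - mf L ℓδ (bshift s y) t| ≤
      2 * (((L s : ℝ) + (L s⁻¹ : ℝ)) * (S0 y).card + 2) / Vf L ℓδ y := by
  classical
  set C : ℝ := (L s : ℝ) + (L s⁻¹ : ℝ) with hCdef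
  have hC0 : 0 ≤ C := by rw [hCdef]; positivity
  set z := bshift s y with hzdef
  set u : Γ → ℝ := fun t => vf L ℓδ y (s⁻¹ * t) with hudef
  set T : Finset Γ := (insert (1:Γ) (S0 y)).image (fun r => s * r) ∪
    insert (1:Γ) (S0 z) with hTdef
  have hTz : insert (1:Γ) (S0 z) ⊆ T := Finset.subset_union_right
  have hu0 : ∀ t, 0 ≤ u t := fun t => vf_nonneg L ℓδ y _
  have hu : ∀ t ∉ T, u t = 0 := by
    intro t ht
    rw [hudef]
    dsimp only
    apply vf_eq_zero
    intro hmem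
    apply ht
    apply Finset.mem_union_left
    exact Finset.mem_image.mpr ⟨s⁻¹ * t, hmem, by group⟩
  have himg : insert (1:Γ) (S0 y) ⊆ T.image (fun t => s⁻¹ * t) := by
    intro r hr
    refine Finset.mem_image.mpr ⟨s * r, ?_, by group⟩
    exact Finset.mem_union_left _ (Finset.mem_image.mpr ⟨r, hr, rfl⟩)
  have hsum_u : ∑ t ∈ T, u t = Vf L ℓδ y := by
    rw [hudef]
    dsimp only
    rw [← Finset.sum_image (g := fun t => s⁻¹ * t) (f := vf L ℓδ y)
      (fun a _ b _ h => mul_left_cancel h)]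
    exact sum_vf L ℓδ y himg
  have key := ratio_dist u (vf L ℓδ z) T hu0 (vf_nonneg L ℓδ z) hu
    (fun t ht => vf_eq_zero L ℓδ z (fun hmem => ht (hTz hmem)))
    (by rw [hsum_u]; exact Vf_pos L ℓδ y)
    (by rw [sum_vf L ℓδ z hTz]; exact Vf_pos L ℓδ z)
  rw [hsum_u, sum_vf L ℓδ z hTz] at key
  set φ : Γ → ℝ := fun t => (if (y : Γ → Δ) (s⁻¹ * t) = 1 then 0 else C) +
    ((if t = (1:Γ) then (1:ℝ) else 0) + (if t = s then (1:ℝ) else 0)) with hφdef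
  have hpt : ∀ t, |vf L ℓδ z t - u t| ≤ φ t := by
    intro t
    have hzc : (z : Γ → Δ) t = (y : Γ → Δ) (s⁻¹ * t) := rfl
    have hind : (if s⁻¹ * t = (1:Γ) then (1:ℝ) else 0) = (if t = s then (1:ℝ) else 0) := by
      simp only [inv_mul_eq_one]
      by_cases h : s = t
      · rw [if_pos h, if_pos h.symm]
      · rw [if_neg h, if_neg (fun hh => h hh.symm)]
    have hLt := abs_le.mp (hLs t)
    rw [hφdef]
    dsimp only
    rw [hudef]
    dsimp only
    unfold vf
    rw [hzc, hind]
    by_cases h1 : (y : Γ → Δ) (s⁻¹ * t) = 1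
    · simp only [h1, if_true]
      rw [abs_le]
      constructor <;> split_ifs <;> norm_num <;> linarith
    · simp only [h1, if_false]
      rw [abs_le]
      constructor <;> split_ifs <;> push_cast <;> linarith [hLt.1, hLt.2]
  have hsum_φ : ∑ t ∈ T, φ t ≤ C * (S0 y).card + 2 := by
    rw [hφdef]
    dsimp only
    rw [Finset.sum_add_distrib, Finset.sum_add_distrib]
    have hb1 : ∑ t ∈ T, (if (y : Γ → Δ) (s⁻¹ * t) = 1 then (0:ℝ) else C) ≤
        C * (S0 y).card := by
      set B1 : Finset Γ := (S0 y).image (fun r => s * r) with hB1def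
      have hz1 : ∀ t ∉ B1, (if (y : Γ → Δ) (s⁻¹ * t) = 1 then (0:ℝ) else C) = 0 := by
        intro t ht
        rw [if_pos]
        by_contra h
        exact ht (Finset.mem_image.mpr ⟨s⁻¹ * t, mem_S0.mpr h, by group⟩)
      calc ∑ t ∈ T, (if (y : Γ → Δ) (s⁻¹ * t) = 1 then (0:ℝ) else C)
          ≤ ∑ t ∈ B1, (if (y : Γ → Δ) (s⁻¹ * t) = 1 then (0:ℝ) else C) :=
            sum_le_of_support _ B1 (fun t => by split <;> simp [hC0]) hz1 T
      _ ≤ ∑ _t ∈ B1, C := Finset.sum_le_sum (fun t _ => by split <;> simp [hC0])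
      _ = (B1.card : ℝ) * C := by rw [Finset.sum_const, nsmul_eq_mul]
      _ ≤ ((S0 y).card : ℝ) * C := by
          have := Finset.card_image_le (s := S0 y) (f := fun r => s * r)
          have hcast : ((B1.card : ℝ)) ≤ ((S0 y).card : ℝ) := by exact_mod_cast this
          exact mul_le_mul_of_nonneg_right hcast hC0
      _ = C * (S0 y).card := by ring
    have hb2 : ∑ t ∈ T, (if t = (1:Γ) then (1:ℝ) else 0) ≤ 1 := by
      calc ∑ t ∈ T, (if t = (1:Γ) then (1:ℝ) else 0)
          ≤ ∑ t ∈ {(1:Γ)}, (if t = (1:Γ) then (1:ℝ) else 0) :=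
            sum_le_of_support _ {(1:Γ)} (fun t => by split <;> norm_num)
              (fun t ht => if_neg (by simpa using ht)) T
      _ = 1 := by simp
    have hb3 : ∑ t ∈ T, (if t = s then (1:ℝ) else 0) ≤ 1 := by
      calc ∑ t ∈ T, (if t = s then (1:ℝ) else 0)
          ≤ ∑ t ∈ {s}, (if t = s then (1:ℝ) else 0) :=
            sum_le_of_support _ {s} (fun t => by split <;> norm_num)
              (fun t ht => if_neg (by simpa using ht)) T
      _ = 1 := by simp
    linarith
  have hVy := Vf_pos L ℓδ y
  calc ∑' t, |mf L ℓδ y (s⁻¹ * t) - mf L ℓδ z t|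
      = ∑' t, |vf L ℓδ z t / Vf L ℓδ z - u t / Vf L ℓδ y| := by
        refine tsum_congr (fun t => ?_)
        rw [abs_sub_comm]
        simp only [mf, hudef]
  _ ≤ 2 * (∑ t ∈ T, |vf L ℓδ z t - u t|) / Vf L ℓδ y := key
  _ ≤ 2 * (C * (S0 y).card + 2) / Vf L ℓδ y := by
      gcongr
      calc ∑ t ∈ T, |vf L ℓδ z t - u t| ≤ ∑ t ∈ T, φ t :=
            Finset.sum_le_sum (fun t _ => hpt t)
      _ ≤ C * (S0 y).card + 2 := hsum_φ

end Main

open Filter in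
/-- For countable discrete groups `Γ` and `Δ` there is a map
`μ : Δ_Γ → Prob(Γ)` such that (i) for every `s ∈ Γ`,
`‖s·μ_y − μ_{s·y}‖₁ → 0` as `y → ∞` along the cofinite filter on `Δ_Γ`
(where `(s·μ)(t) = μ(s⁻¹t)` and `s·y` is the Bernoulli shift), and (ii) for every
`x ∈ Δ_Γ`, `‖μ_{xy} − μ_y‖₁ → 0` and `‖μ_{yx} − μ_y‖₁ → 0` as `y → ∞` along the
cofinite filter. -/
theorem stmt0 (Γ Δ : Type*) [Group Γ] [Group Δ] [Countable Γ] [Countable Δ] :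
    ∃ μ : DeltaGamma Γ Δ → Γ → ℝ,
      (∀ y, (∀ t, 0 ≤ μ y t) ∧ Summable (μ y) ∧ (∑' t, μ y t) = 1) ∧
      (∀ s : Γ,
        Tendsto (fun y : DeltaGamma Γ Δ => ∑' t, |μ y (s⁻¹ * t) - μ (bshift s y) t|)
          cofinite (nhds 0)) ∧
      (∀ x : DeltaGamma Γ Δ,
        Tendsto (fun y : DeltaGamma Γ Δ => ∑' t, |μ (x * y) t - μ y t|)
          cofinite (nhds 0)) ∧
      (∀ x : DeltaGamma Γ Δ,
        Tendsto (fun y : DeltaGamma Γ Δ => ∑' t, |μ (y * x) t - μ y t|)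
          cofinite (nhds 0)) := by
  obtain ⟨L, hL1, hLsub, hLinv, hLfin⟩ := exists_length Γ
  obtain ⟨ℓδ, hd1, hdsub, hdinv, hdfin⟩ := exists_length Δ
  refine ⟨mf L ℓδ, fun y => ⟨mf_nonneg L ℓδ y, mf_summable L ℓδ y, mf_tsum L ℓδ y⟩,
    ?_, ?_, ?_⟩
  · -- Bernoulli shift condition
    intro s
    have hLs : ∀ t : Γ, |(L t : ℝ) - (L (s⁻¹ * t) : ℝ)| ≤ (L s : ℝ) + (L s⁻¹ : ℝ) := by
      intro t
      have h1 : L t ≤ L s + L (s⁻¹ * t) := by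
        have h := hLsub s (s⁻¹ * t)
        rwa [mul_inv_cancel_left] at h
      have h2 : L (s⁻¹ * t) ≤ L s⁻¹ + L t := hLsub s⁻¹ t
      have h1' : (L t : ℝ) ≤ (L s : ℝ) + (L (s⁻¹ * t) : ℝ) := by exact_mod_cast h1
      have h2' : (L (s⁻¹ * t) : ℝ) ≤ (L s⁻¹ : ℝ) + (L t : ℝ) := by exact_mod_cast h2
      have hp1 : (0:ℝ) ≤ L s := by positivity
      have hp2 : (0:ℝ) ≤ L s⁻¹ := by positivity
      rw [abs_le]
      constructor <;> linarith
    refine squeeze_zero (fun y => tsum_nonneg (fun t => abs_nonneg _))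
      (fun y => dist_bound_shift L ℓδ s y hLs) ?_
    exact tendsto_bound_A L ℓδ hLfin hdfin ((L s : ℝ) + (L s⁻¹ : ℝ)) (by positivity)
  · -- left multiplication
    intro x
    refine squeeze_zero (fun y => tsum_nonneg (fun t => abs_nonneg _))
      (fun y => dist_bound_mul L ℓδ hd1 x y (x * y) ?_ ?_ ?_)
      (tendsto_div_Vf L ℓδ hLfin hdfin _)
    · intro t h
      show (x : Γ → Δ) t * (y : Γ → Δ) t = (y : Γ → Δ) t
      rw [h, one_mul]
    · intro t
      show (ℓδ ((x : Γ → Δ) t * (y : Γ → Δ) t) : ℝ) ≤ _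
      have h := hdsub ((x : Γ → Δ) t) ((y : Γ → Δ) t)
      have h' : (ℓδ ((x : Γ → Δ) t * (y : Γ → Δ) t) : ℝ) ≤
          (ℓδ ((x : Γ → Δ) t) : ℝ) + (ℓδ ((y : Γ → Δ) t) : ℝ) := by exact_mod_cast h
      have hp : (0:ℝ) ≤ (ℓδ (((x : Γ → Δ) t)⁻¹) : ℝ) := by positivity
      linarith
    · intro t
      show (ℓδ ((y : Γ → Δ) t) : ℝ) ≤ (ℓδ ((x : Γ → Δ) t * (y : Γ → Δ) t) : ℝ) + _
      have h := hdsub (((x : Γ → Δ) t)⁻¹) ((x : Γ → Δ) t * (y : Γ → Δ) t)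
      rw [inv_mul_cancel_left] at h
      have h' : (ℓδ ((y : Γ → Δ) t) : ℝ) ≤ (ℓδ (((x : Γ → Δ) t)⁻¹) : ℝ) +
          (ℓδ ((x : Γ → Δ) t * (y : Γ → Δ) t) : ℝ) := by exact_mod_cast h
      have hp : (0:ℝ) ≤ (ℓδ ((x : Γ → Δ) t) : ℝ) := by positivity
      linarith
  · -- right multiplication
    intro x
    refine squeeze_zero (fun y => tsum_nonneg (fun t => abs_nonneg _))
      (fun y => dist_bound_mul L ℓδ hd1 x y (y * x) ?_ ?_ ?_)
      (tendsto_div_Vf L ℓδ hLfin hdfin _)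
    · intro t h
      show (y : Γ → Δ) t * (x : Γ → Δ) t = (y : Γ → Δ) t
      rw [h, mul_one]
    · intro t
      show (ℓδ ((y : Γ → Δ) t * (x : Γ → Δ) t) : ℝ) ≤ _
      have h := hdsub ((y : Γ → Δ) t) ((x : Γ → Δ) t)
      have h' : (ℓδ ((y : Γ → Δ) t * (x : Γ → Δ) t) : ℝ) ≤
          (ℓδ ((y : Γ → Δ) t) : ℝ) + (ℓδ ((x : Γ → Δ) t) : ℝ) := by exact_mod_cast h
      have hp : (0:ℝ) ≤ (ℓδ (((x : Γ → Δ) t)⁻¹) : ℝ) := by positivity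
      linarith
    · intro t
      show (ℓδ ((y : Γ → Δ) t) : ℝ) ≤ (ℓδ ((y : Γ → Δ) t * (x : Γ → Δ) t) : ℝ) + _
      have h := hdsub ((y : Γ → Δ) t * (x : Γ → Δ) t) (((x : Γ → Δ) t)⁻¹)
      rw [mul_inv_cancel_right] at h
      have h' : (ℓδ ((y : Γ → Δ) t) : ℝ) ≤
          (ℓδ ((y : Γ → Δ) t * (x : Γ → Δ) t) : ℝ) +
          (ℓδ (((x : Γ → Δ) t)⁻¹) : ℝ) := by exact_mod_cast h
      have hp : (0:ℝ) ≤ (ℓδ ((x : Γ → Δ) t) : ℝ) := by positivity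
      linarith
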